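/- Let m, n be natural numbers, let s, t : Fin m → Fin n with s k ≠ t k for all k, let L : Fin m → ℝ with L k > 0, let D : Fin m → ℝ, and let c : ℝ. For each k ∈ Fin m let p_k, q_k : ℝ → ℝ be functions having derivatives p_k'(x), q_k'(x) at every x ∈ [0, L k], with p_k' and q_k' interval-integrable on [0, L k]. Assume there exists P : Fin n → ℝ such that p_k(0) = P(s k) and p_k(L k) = P(t k) for all k (pressure continuity), and that for every vertex v ∈ Fin n: P v · ( Σ_{k : t k = v} (D k)² · q_k(L k) − Σ_{k : s k = v} (D k)² · q_k(0) ) = 0. Then Σ_{k ∈ Fin m} (D k)² · c² · ∫_0^{L k} ( q_k'(x) · p_k(x) + p_k'(x) · q_k(x) ) dx = 0. -/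

import Mathlib

open MeasureTheory

/-- dissipativity identity `(𝔸u, u) = 0` for the network transport
operator, expressed as a sum over pipes of interval integrals. -/
theorem network_dissipativity_identity
    (m n : ℕ) (s t : Fin m → Fin n) (hst : ∀ k, s k ≠ t k)
    (L : Fin m → ℝ) (hL : ∀ k, 0 < L k) (D : Fin m → ℝ) (c : ℝ)
    (p q p' q' : Fin m → ℝ → ℝ)
    (hp : ∀ k, ∀ x ∈ Set.Icc (0 : ℝ) (L k), HasDerivAt (p k) (p' k x) x)
    (hq : ∀ k, ∀ x ∈ Set.Icc (0 : ℝ) (L k), HasDerivAt (q k) (q' k x) x)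
    (hp' : ∀ k, IntervalIntegrable (p' k) volume 0 (L k))
    (hq' : ∀ k, IntervalIntegrable (q' k) volume 0 (L k))
    (P : Fin n → ℝ)
    (hP0 : ∀ k, p k 0 = P (s k)) (hPL : ∀ k, p k (L k) = P (t k))
    (hvertex : ∀ v : Fin n,
      P v * ((∑ k ∈ Finset.univ.filter fun k => t k = v, (D k) ^ 2 * q k (L k)) -
             (∑ k ∈ Finset.univ.filter fun k => s k = v, (D k) ^ 2 * q k 0)) = 0) :
    ∑ k : Fin m, (D k) ^ 2 * c ^ 2 *
      ∫ x in (0 : ℝ)..(L k), (q' k x * p k x + p' k x * q k x) = 0 := by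
  have hint : ∀ k : Fin m,
      (∫ x in (0 : ℝ)..(L k), (q' k x * p k x + p' k x * q k x))
        = p k (L k) * q k (L k) - p k 0 * q k 0 := by
    intro k
    have h := intervalIntegral.integral_eq_sub_of_hasDerivAt
      (f := fun x => p k x * q k x)
      (f' := fun x => q' k x * p k x + p' k x * q k x)
      (a := (0 : ℝ)) (b := L k)
      (fun x hx => by
        have hx' : x ∈ Set.Icc (0 : ℝ) (L k) := by
          rwa [Set.uIcc_of_le (le_of_lt (hL k))] at hx
        have := (hp k x hx').mul (hq k x hx')
        exact this.congr_deriv (by ring))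
      (by
        apply IntervalIntegrable.add
        · exact (hq' k).mul_continuousOn (by
            apply ContinuousOn.mono (s := Set.Icc (0:ℝ) (L k))
            · exact fun x hx => (hp k x hx).continuousAt.continuousWithinAt
            · rw [Set.uIcc_of_le (le_of_lt (hL k))])
        · exact (hp' k).mul_continuousOn (by
            apply ContinuousOn.mono (s := Set.Icc (0:ℝ) (L k))
            · exact fun x hx => (hq k x hx).continuousAt.continuousWithinAt
            · rw [Set.uIcc_of_le (le_of_lt (hL k))]))
    simpa using h
  have key : ∑ k : Fin m, (D k) ^ 2 * c ^ 2 *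
      ∫ x in (0 : ℝ)..(L k), (q' k x * p k x + p' k x * q k x)
      = c ^ 2 * ∑ v : Fin n,
        P v * ((∑ k ∈ Finset.univ.filter fun k => t k = v, (D k) ^ 2 * q k (L k)) -
             (∑ k ∈ Finset.univ.filter fun k => s k = v, (D k) ^ 2 * q k 0)) := by
    simp only [hint, hP0, hPL]
    rw [Finset.mul_sum]
    have hrhs : ∀ v : Fin n, c ^ 2 *
        (P v * ((∑ k ∈ Finset.univ.filter fun k => t k = v, (D k) ^ 2 * q k (L k)) -
             (∑ k ∈ Finset.univ.filter fun k => s k = v, (D k) ^ 2 * q k 0)))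
        = (∑ k ∈ Finset.univ.filter fun k => t k = v,
            c ^ 2 * P (t k) * ((D k) ^ 2 * q k (L k)))
          - ∑ k ∈ Finset.univ.filter fun k => s k = v,
            c ^ 2 * P (s k) * ((D k) ^ 2 * q k 0) := by
      intro v
      rw [mul_sub, mul_sub, Finset.mul_sum, Finset.mul_sum, Finset.mul_sum,
        Finset.mul_sum]
      congr 1
      · exact Finset.sum_congr rfl fun k hk => by
          rw [(Finset.mem_filter.mp hk).2]; ring
      · exact Finset.sum_congr rfl fun k hk => by
          rw [(Finset.mem_filter.mp hk).2]; ring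
    simp only [hrhs]
    rw [Finset.sum_sub_distrib,
      Finset.sum_fiberwise Finset.univ t (fun k => c ^ 2 * P (t k) * ((D k) ^ 2 * q k (L k))),
      Finset.sum_fiberwise Finset.univ s (fun k => c ^ 2 * P (s k) * ((D k) ^ 2 * q k 0)),
      ← Finset.sum_sub_distrib]
    refine Finset.sum_congr rfl fun k _ => ?_
    ring
  rw [key]
  simp [hvertex]
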